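/- Let π₋, π₊, π₋', π₊' be strictly positive real numbers with π₋ + π₊ = 1 and π₋' + π₊' = 1, and define f : [0,1] → [0,1] by f(x) = (x·π₊'/π₊) / ((1−x)·π₋'/π₋ + x·π₊'/π₊). Let a, b ∈ [0,1], and for a performance P with tn + fp = π₋ and fn + tp = π₊ let shift(P) = (tn·π₋'/π₋, fp·π₋'/π₋, fn·π₊'/π₊, tp·π₊'/π₊). Then for any two such performances P₁ and P₂ such that R_{a,b} is defined at shift(P₁) and shift(P₂) and R_{f(a),f(b)} is defined at P₁ and P₂, one has R_{a,b}(shift(P₁)) ≤ R_{a,b}(shift(P₂)) if and only if R_{f(a),f(b)}(P₁) ≤ R_{f(a),f(b)}(P₂). -/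

import Mathlib

/-- Canonical ranking score `R_{a,b}` of a performance `(tn, fp, fn, tp)`. -/
noncomputable def Rab (a b tn fp fn tp : ℝ) : ℝ :=
  ((1 - a) * tn + a * tp) / ((1 - a) * tn + (1 - b) * fp + b * fn + a * tp)

/-- Denominator of the canonical ranking score `R_{a,b}`. -/
def RabDen (a b tn fp fn tp : ℝ) : ℝ :=
  (1 - a) * tn + (1 - b) * fp + b * fn + a * tp

/-- The reparametrization `f` of the Tile parameters induced by a target/prior
shift from `(pn, pp)` to `(pn', pp')`. -/
noncomputable def fShift (pn pp pn' pp' x : ℝ) : ℝ :=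
  (x * (pp' / pp)) / ((1 - x) * (pn' / pn) + x * (pp' / pp))

lemma ratio_iff (N M N' M' : ℝ) (h1 : 0 < N + M) (h2 : 0 < N' + M') :
    N / (N + M) ≤ N' / (N' + M') ↔ N * M' ≤ N' * M := by
  rw [div_le_div_iff₀ h1 h2]
  constructor <;> intro h <;> nlinarith

lemma pos_comb (α β a : ℝ) (hα : 0 < α) (hβ : 0 < β) (ha0 : 0 ≤ a) (ha1 : a ≤ 1) :
    0 < (1 - a) * α + a * β := by
  rcases lt_or_ge a 1 with h | h
  · have h1 : 0 < (1 - a) * α := mul_pos (by linarith) hα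
    nlinarith [mul_nonneg ha0 hβ.le]
  · have : a = 1 := le_antisymm ha1 h
    subst this; simpa using hβ

lemma rab_aux (α β a b : ℝ) (hα : 0 < α) (hβ : 0 < β)
    (ha0 : 0 ≤ a) (ha1 : a ≤ 1) (hb0 : 0 ≤ b) (hb1 : b ≤ 1)
    (tn₁ fp₁ fn₁ tp₁ : ℝ)
    (htn₁ : 0 ≤ tn₁) (hfp₁ : 0 ≤ fp₁) (hfn₁ : 0 ≤ fn₁) (htp₁ : 0 ≤ tp₁)
    (tn₂ fp₂ fn₂ tp₂ : ℝ)
    (htn₂ : 0 ≤ tn₂) (hfp₂ : 0 ≤ fp₂) (hfn₂ : 0 ≤ fn₂) (htp₂ : 0 ≤ tp₂)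
    (hd₁ : RabDen a b (tn₁ * α) (fp₁ * α) (fn₁ * β) (tp₁ * β) ≠ 0)
    (hd₂ : RabDen a b (tn₂ * α) (fp₂ * α) (fn₂ * β) (tp₂ * β) ≠ 0)
    (hd₁' : RabDen (a * β / ((1 - a) * α + a * β)) (b * β / ((1 - b) * α + b * β))
        tn₁ fp₁ fn₁ tp₁ ≠ 0)
    (hd₂' : RabDen (a * β / ((1 - a) * α + a * β)) (b * β / ((1 - b) * α + b * β))
        tn₂ fp₂ fn₂ tp₂ ≠ 0) :
    Rab a b (tn₁ * α) (fp₁ * α) (fn₁ * β) (tp₁ * β) ≤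
        Rab a b (tn₂ * α) (fp₂ * α) (fn₂ * β) (tp₂ * β) ↔
      Rab (a * β / ((1 - a) * α + a * β)) (b * β / ((1 - b) * α + b * β)) tn₁ fp₁ fn₁ tp₁ ≤
        Rab (a * β / ((1 - a) * α + a * β)) (b * β / ((1 - b) * α + b * β)) tn₂ fp₂ fn₂ tp₂ := by
  have hDa : 0 < (1 - a) * α + a * β := pos_comb α β a hα hβ ha0 ha1
  have hDb : 0 < (1 - b) * α + b * β := pos_comb α β b hα hβ hb0 hb1
  have hDa' : ((1 - a) * α + a * β) ≠ 0 := hDa.ne'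
  have hDb' : ((1 - b) * α + b * β) ≠ 0 := hDb.ne'
  have hfa' : 1 - a * β / ((1 - a) * α + a * β) = (1 - a) * α / ((1 - a) * α + a * β) := by
    field_simp
    ring
  have hfb' : 1 - b * β / ((1 - b) * α + b * β) = (1 - b) * α / ((1 - b) * α + b * β) := by
    field_simp
    ring
  have h1a : 0 ≤ 1 - a := by linarith
  have h1b : 0 ≤ 1 - b := by linarith
  obtain ⟨N1, hN1⟩ : ∃ x : ℝ, x = (1 - a) * α * tn₁ + a * β * tp₁ := ⟨_, rfl⟩
  obtain ⟨M1, hM1⟩ : ∃ x : ℝ, x = (1 - b) * α * fp₁ + b * β * fn₁ := ⟨_, rfl⟩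
  obtain ⟨N2, hN2⟩ : ∃ x : ℝ, x = (1 - a) * α * tn₂ + a * β * tp₂ := ⟨_, rfl⟩
  obtain ⟨M2, hM2⟩ : ∃ x : ℝ, x = (1 - b) * α * fp₂ + b * β * fn₂ := ⟨_, rfl⟩
  have hN1n : 0 ≤ N1 := by
    have := mul_nonneg (mul_nonneg h1a hα.le) htn₁
    have := mul_nonneg (mul_nonneg ha0 hβ.le) htp₁
    rw [hN1]; linarith
  have hM1n : 0 ≤ M1 := by
    have := mul_nonneg (mul_nonneg h1b hα.le) hfp₁
    have := mul_nonneg (mul_nonneg hb0 hβ.le) hfn₁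
    rw [hM1]; linarith
  have hN2n : 0 ≤ N2 := by
    have := mul_nonneg (mul_nonneg h1a hα.le) htn₂
    have := mul_nonneg (mul_nonneg ha0 hβ.le) htp₂
    rw [hN2]; linarith
  have hM2n : 0 ≤ M2 := by
    have := mul_nonneg (mul_nonneg h1b hα.le) hfp₂
    have := mul_nonneg (mul_nonneg hb0 hβ.le) hfn₂
    rw [hM2]; linarith
  have hden1 : RabDen a b (tn₁ * α) (fp₁ * α) (fn₁ * β) (tp₁ * β) = N1 + M1 := by
    rw [RabDen, hN1, hM1]; ring
  have hden2 : RabDen a b (tn₂ * α) (fp₂ * α) (fn₂ * β) (tp₂ * β) = N2 + M2 := by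
    rw [RabDen, hN2, hM2]; ring
  have h1 : 0 < N1 + M1 :=
    lt_of_le_of_ne (by linarith) (fun h => hd₁ (by rw [hden1, ← h]))
  have h2 : 0 < N2 + M2 :=
    lt_of_le_of_ne (by linarith) (fun h => hd₂ (by rw [hden2, ← h]))
  have hden1' : RabDen (a * β / ((1 - a) * α + a * β)) (b * β / ((1 - b) * α + b * β))
      tn₁ fp₁ fn₁ tp₁ = N1 / ((1 - a) * α + a * β) + M1 / ((1 - b) * α + b * β) := by
    rw [RabDen, hfa', hfb', hN1, hM1]; ring
  have hden2' : RabDen (a * β / ((1 - a) * α + a * β)) (b * β / ((1 - b) * α + b * β))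
      tn₂ fp₂ fn₂ tp₂ = N2 / ((1 - a) * α + a * β) + M2 / ((1 - b) * α + b * β) := by
    rw [RabDen, hfa', hfb', hN2, hM2]; ring
  have h1' : 0 < N1 / ((1 - a) * α + a * β) + M1 / ((1 - b) * α + b * β) :=
    lt_of_le_of_ne (by positivity) (fun h => hd₁' (by rw [hden1', ← h]))
  have h2' : 0 < N2 / ((1 - a) * α + a * β) + M2 / ((1 - b) * α + b * β) :=
    lt_of_le_of_ne (by positivity) (fun h => hd₂' (by rw [hden2', ← h]))
  have hL1 : Rab a b (tn₁ * α) (fp₁ * α) (fn₁ * β) (tp₁ * β) = N1 / (N1 + M1) := by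
    rw [Rab, hN1, hM1]; congr 1 <;> ring
  have hL2 : Rab a b (tn₂ * α) (fp₂ * α) (fn₂ * β) (tp₂ * β) = N2 / (N2 + M2) := by
    rw [Rab, hN2, hM2]; congr 1 <;> ring
  have hR1 : Rab (a * β / ((1 - a) * α + a * β)) (b * β / ((1 - b) * α + b * β)) tn₁ fp₁ fn₁ tp₁
      = (N1 / ((1 - a) * α + a * β)) /
        (N1 / ((1 - a) * α + a * β) + M1 / ((1 - b) * α + b * β)) := by
    rw [Rab, hfa', hfb', hN1, hM1]; congr 1 <;> ring
  have hR2 : Rab (a * β / ((1 - a) * α + a * β)) (b * β / ((1 - b) * α + b * β)) tn₂ fp₂ fn₂ tp₂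
      = (N2 / ((1 - a) * α + a * β)) /
        (N2 / ((1 - a) * α + a * β) + M2 / ((1 - b) * α + b * β)) := by
    rw [Rab, hfa', hfb', hN2, hM2]; congr 1 <;> ring
  rw [hL1, hL2, hR1, hR2, ratio_iff N1 M1 N2 M2 h1 h2,
    ratio_iff _ _ _ _ h1' h2', div_mul_div_comm, div_mul_div_comm,
    div_le_div_iff_of_pos_right (by positivity : 0 < ((1 - a) * α + a * β) * ((1 - b) * α + b * β))]

/-- The ordering induced by `R_{a,b}` composed with the target/prior shift from
`(pn, pp)` to `(pn', pp')` is the same as the ordering induced by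
`R_{f(a),f(b)}`. -/
theorem rab_priorShift_ordering
    (pn pp pn' pp' : ℝ) (hpn : 0 < pn) (hpp : 0 < pp) (hpn' : 0 < pn') (hpp' : 0 < pp')
    (hps : pn + pp = 1) (hps' : pn' + pp' = 1)
    (a b : ℝ) (ha : a ∈ Set.Icc (0:ℝ) 1) (hb : b ∈ Set.Icc (0:ℝ) 1)
    (tn₁ fp₁ fn₁ tp₁ : ℝ)
    (htn₁ : 0 ≤ tn₁) (hfp₁ : 0 ≤ fp₁) (hfn₁ : 0 ≤ fn₁) (htp₁ : 0 ≤ tp₁)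
    (hsum₁ : tn₁ + fp₁ + fn₁ + tp₁ = 1)
    (hpr₁n : tn₁ + fp₁ = pn) (hpr₁p : fn₁ + tp₁ = pp)
    (tn₂ fp₂ fn₂ tp₂ : ℝ)
    (htn₂ : 0 ≤ tn₂) (hfp₂ : 0 ≤ fp₂) (hfn₂ : 0 ≤ fn₂) (htp₂ : 0 ≤ tp₂)
    (hsum₂ : tn₂ + fp₂ + fn₂ + tp₂ = 1)
    (hpr₂n : tn₂ + fp₂ = pn) (hpr₂p : fn₂ + tp₂ = pp)
    (hd₁ : RabDen a b (tn₁ * (pn' / pn)) (fp₁ * (pn' / pn))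
        (fn₁ * (pp' / pp)) (tp₁ * (pp' / pp)) ≠ 0)
    (hd₂ : RabDen a b (tn₂ * (pn' / pn)) (fp₂ * (pn' / pn))
        (fn₂ * (pp' / pp)) (tp₂ * (pp' / pp)) ≠ 0)
    (hd₁' : RabDen (fShift pn pp pn' pp' a) (fShift pn pp pn' pp' b) tn₁ fp₁ fn₁ tp₁ ≠ 0)
    (hd₂' : RabDen (fShift pn pp pn' pp' a) (fShift pn pp pn' pp' b) tn₂ fp₂ fn₂ tp₂ ≠ 0) :
    Rab a b (tn₁ * (pn' / pn)) (fp₁ * (pn' / pn)) (fn₁ * (pp' / pp)) (tp₁ * (pp' / pp)) ≤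
        Rab a b (tn₂ * (pn' / pn)) (fp₂ * (pn' / pn)) (fn₂ * (pp' / pp)) (tp₂ * (pp' / pp)) ↔
      Rab (fShift pn pp pn' pp' a) (fShift pn pp pn' pp' b) tn₁ fp₁ fn₁ tp₁ ≤
        Rab (fShift pn pp pn' pp' a) (fShift pn pp pn' pp' b) tn₂ fp₂ fn₂ tp₂ := by
  obtain ⟨ha0, ha1⟩ := ha
  obtain ⟨hb0, hb1⟩ := hb
  have hfa : fShift pn pp pn' pp' a
      = a * (pp' / pp) / ((1 - a) * (pn' / pn) + a * (pp' / pp)) := rfl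
  have hfb : fShift pn pp pn' pp' b
      = b * (pp' / pp) / ((1 - b) * (pn' / pn) + b * (pp' / pp)) := rfl
  rw [hfa, hfb] at hd₁' hd₂' ⊢
  exact rab_aux (pn' / pn) (pp' / pp) a b (div_pos hpn' hpn) (div_pos hpp' hpp)
    ha0 ha1 hb0 hb1 tn₁ fp₁ fn₁ tp₁ htn₁ hfp₁ hfn₁ htp₁
    tn₂ fp₂ fn₂ tp₂ htn₂ hfp₂ hfn₂ htp₂ hd₁ hd₂ hd₁' hd₂'
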